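/- arXiv:2109.09836 — 10 statements merged into one kernel-verified Lean document; each statement's English description precedes it below -/
import Mathlib

section
/- Let (ε, η) : f ⊣ g be an adjunction in a bicategory, with f : a ⟶ b and g : b ⟶ a. Then the following are equivalent: (1) g is a lax epimorphism; (2) f is fully faithful; (3) the unit η : 𝟙_a ⟶ f ≫ g is invertible. -/
open CategoryTheory Bicategory

universe w v u

/-- A 1-cell `f : a ⟶ b` in a bicategory is a *lax epimorphism* if for every object `c`,
the precomposition functor `(b ⟶ c) ⥤ (a ⟶ c)`, sending `g` to `f ≫ g` and a 2-cell `θ`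
to `f ◁ θ`, is full and faithful. -/
def IsLaxEpi {B : Type u} [Bicategory.{w, v} B] {a b : B} (f : a ⟶ b) : Prop :=
  ∀ c : B, (Bicategory.precomp c f).Full ∧ (Bicategory.precomp c f).Faithful

/-- A 1-cell `f : a ⟶ b` in a bicategory is *fully faithful* if for every object `x`,
the postcomposition functor `(x ⟶ a) ⥤ (x ⟶ b)`, sending `k` to `k ≫ f` and a 2-cell `θ`
to `θ ▷ f`, is full and faithful. -/
def IsFullyFaithful1Cell {B : Type u} [Bicategory.{w, v} B] {a b : B} (f : a ⟶ b) : Prop :=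
  ∀ x : B, (Bicategory.postcomp x f).Full ∧ (Bicategory.postcomp x f).Faithful

section Aux
variable {B : Type u} [Bicategory.{w, v} B] {a b : B} {f : a ⟶ b} {g : b ⟶ a}

open scoped Bicategory in
/-- The adjunction `precomp c g ⊣ precomp c f` induced by `f ⊣ g`. -/
def precompAdj (adj : f ⊣ g) (c : B) :
    CategoryTheory.Adjunction (Bicategory.precomp c g) (Bicategory.precomp c f) :=
  CategoryTheory.Adjunction.mkOfUnitCounit
    { unit :=
        { app := fun h => (λ_ h).inv ≫ adj.unit ▷ h ≫ (α_ f g h).hom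
          naturality := fun h₁ h₂ θ => by
            dsimp [precomp]
            rw [leftUnitor_inv_naturality_assoc, whisker_exchange_assoc]
            simp }
      counit :=
        { app := fun h => (α_ g f h).inv ≫ adj.counit ▷ h ≫ (λ_ h).hom
          naturality := fun h₁ h₂ θ => by
            dsimp [precomp]
            rw [associator_inv_naturality_right_assoc, whisker_exchange_assoc]
            simp }
      left_triangle := by
        ext h
        have hR : g ◁ adj.unit ≫ (α_ g f g).inv ≫ adj.counit ▷ g = (ρ_ g).hom ≫ (λ_ g).inv := by
          rw [← adj.right_triangle]; bicategory
        dsimp [precomp]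
        calc _ = 𝟙 _ ⊗≫ (g ◁ adj.unit ≫ (α_ g f g).inv ≫ adj.counit ▷ g) ▷ h ⊗≫ 𝟙 _ := by
              bicategory
          _ = _ := by rw [hR]; bicategory
      right_triangle := by
        ext h
        have hL : adj.unit ▷ f ≫ (α_ f g f).hom ≫ f ◁ adj.counit = (λ_ f).hom ≫ (ρ_ f).inv := by
          rw [← adj.left_triangle]; bicategory
        dsimp [precomp]
        calc _ = 𝟙 _ ⊗≫ (adj.unit ▷ f ≫ (α_ f g f).hom ≫ f ◁ adj.counit) ▷ h ⊗≫ 𝟙 _ := by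
              bicategory
          _ = _ := by rw [hL]; bicategory }

open scoped Bicategory in
/-- The adjunction `postcomp x f ⊣ postcomp x g` induced by `f ⊣ g`. -/
def postcompAdj (adj : f ⊣ g) (x : B) :
    CategoryTheory.Adjunction (Bicategory.postcomp x f) (Bicategory.postcomp x g) :=
  CategoryTheory.Adjunction.mkOfUnitCounit
    { unit :=
        { app := fun k => (ρ_ k).inv ≫ k ◁ adj.unit ≫ (α_ k f g).inv
          naturality := fun k₁ k₂ θ => by
            dsimp [postcomp]
            rw [rightUnitor_inv_naturality_assoc, ← whisker_exchange_assoc]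
            simp }
      counit :=
        { app := fun h => (α_ h g f).hom ≫ h ◁ adj.counit ≫ (ρ_ h).hom
          naturality := fun h₁ h₂ θ => by
            dsimp [postcomp]
            rw [associator_naturality_left_assoc, ← whisker_exchange_assoc]
            simp }
      left_triangle := by
        ext k
        have hL : adj.unit ▷ f ≫ (α_ f g f).hom ≫ f ◁ adj.counit = (λ_ f).hom ≫ (ρ_ f).inv := by
          rw [← adj.left_triangle]; bicategory
        dsimp [postcomp]
        calc _ = 𝟙 _ ⊗≫ k ◁ (adj.unit ▷ f ≫ (α_ f g f).hom ≫ f ◁ adj.counit) ⊗≫ 𝟙 _ := by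
              bicategory
          _ = _ := by rw [hL]; bicategory
      right_triangle := by
        ext h
        have hR : g ◁ adj.unit ≫ (α_ g f g).inv ≫ adj.counit ▷ g = (ρ_ g).hom ≫ (λ_ g).inv := by
          rw [← adj.right_triangle]; bicategory
        dsimp [postcomp]
        calc _ = 𝟙 _ ⊗≫ h ◁ (g ◁ adj.unit ≫ (α_ g f g).inv ≫ adj.counit ▷ g) ⊗≫ 𝟙 _ := by
              bicategory
          _ = _ := by rw [hR]; bicategory }

theorem isLaxEpi_iff_isIso_unit (adj : f ⊣ g) :
    (∀ c : B, (Bicategory.precomp c g).Full ∧ (Bicategory.precomp c g).Faithful)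
      ↔ IsIso adj.unit := by
  constructor
  · intro hg
    haveI := (hg a).1
    haveI := (hg a).2
    haveI : IsIso ((precompAdj adj a).unit) :=
      Adjunction.unit_isIso_of_L_fully_faithful _
    haveI : IsIso (adj.unit ▷ 𝟙 a) := by
      have : adj.unit ▷ 𝟙 a =
          (λ_ (𝟙 a)).hom ≫ (precompAdj adj a).unit.app (𝟙 a) ≫ (α_ f g (𝟙 a)).inv := by
        simp [precompAdj, precomp]
      rw [this]; exact IsIso.comp_isIso' inferInstance (IsIso.comp_isIso' (NatIso.isIso_app_of_isIso _ _) (Iso.isIso_inv _))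
    have : adj.unit = (ρ_ (𝟙 a)).inv ≫ (adj.unit ▷ 𝟙 a) ≫ (ρ_ (f ≫ g)).hom := by simp
    rw [this]; infer_instance
  · intro hη c
    haveI : IsIso ((precompAdj adj c).unit) := by
      have : ∀ h : a ⟶ c, IsIso (((precompAdj adj c).unit).app h) := fun h => by
        have : ((precompAdj adj c).unit).app h =
            (λ_ h).inv ≫ adj.unit ▷ h ≫ (α_ f g h).hom := by simp [precompAdj, precomp]
        rw [this]; exact (inferInstance : IsIso ((λ_ h).inv ≫ adj.unit ▷ h ≫ (α_ f g h).hom))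
      exact NatIso.isIso_of_isIso_app _
    exact ⟨(Adjunction.fullyFaithfulLOfIsIsoUnit (precompAdj adj c)).full,
      (Adjunction.fullyFaithfulLOfIsIsoUnit (precompAdj adj c)).faithful⟩

theorem fullyFaithful_iff_isIso_unit (adj : f ⊣ g) :
    (∀ x : B, (Bicategory.postcomp x f).Full ∧ (Bicategory.postcomp x f).Faithful)
      ↔ IsIso adj.unit := by
  constructor
  · intro hf
    haveI := (hf a).1
    haveI := (hf a).2
    haveI : IsIso ((postcompAdj adj a).unit) :=
      Adjunction.unit_isIso_of_L_fully_faithful _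
    haveI : IsIso (𝟙 a ◁ adj.unit) := by
      have : 𝟙 a ◁ adj.unit =
          (ρ_ (𝟙 a)).hom ≫ (postcompAdj adj a).unit.app (𝟙 a) ≫ (α_ (𝟙 a) f g).hom := by
        simp [postcompAdj, postcomp]
      rw [this]; exact IsIso.comp_isIso' inferInstance (IsIso.comp_isIso' (NatIso.isIso_app_of_isIso _ _) (Iso.isIso_hom _))
    have : adj.unit = (λ_ (𝟙 a)).inv ≫ (𝟙 a ◁ adj.unit) ≫ (λ_ (f ≫ g)).hom := by simp
    rw [this]; infer_instance
  · intro hη x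
    haveI : IsIso ((postcompAdj adj x).unit) := by
      have : ∀ k : x ⟶ a, IsIso (((postcompAdj adj x).unit).app k) := fun k => by
        have : ((postcompAdj adj x).unit).app k =
            (ρ_ k).inv ≫ k ◁ adj.unit ≫ (α_ k f g).inv := by simp [postcompAdj, postcomp]
        rw [this]; exact (inferInstance : IsIso ((ρ_ k).inv ≫ k ◁ adj.unit ≫ (α_ k f g).inv))
      exact NatIso.isIso_of_isIso_app _
    exact ⟨(Adjunction.fullyFaithfulLOfIsIsoUnit (postcompAdj adj x)).full,
      (Adjunction.fullyFaithfulLOfIsIsoUnit (postcompAdj adj x)).faithful⟩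

end Aux

/-- Given an adjunction `f ⊣ g` in a bicategory, the following are equivalent:
`g` is a lax epimorphism; `f` is fully faithful; the unit is invertible. -/
theorem laxEpi_iff_fullyFaithful_iff_isIso_unit {B : Type u} [Bicategory.{w, v} B]
    {a b : B} {f : a ⟶ b} {g : b ⟶ a} (adj : f ⊣ g) :
    (IsLaxEpi g ↔ IsFullyFaithful1Cell f) ∧ (IsFullyFaithful1Cell f ↔ IsIso adj.unit) := by
  have h1 := isLaxEpi_iff_isIso_unit adj
  have h2 := fullyFaithful_iff_isIso_unit adj
  exact ⟨h1.trans h2.symm, h2⟩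
end

section
/- A group homomorphism f : A →* B is surjective if and only if for every group C, all group homomorphisms g, h : B →* C, and every element γ of C satisfying g(f(x)) * γ = γ * h(f(x)) for all x ∈ A, one has g(y) * γ = γ * h(y) for all y ∈ B. -/
universe w u v

section LaxEpiAux

variable {A : Type u} {B : Type v} [Group A] [Group B]

/-- The auxiliary type on which `B` acts: the left coset space `B ⧸ f.range`
plus one extra fixed point, lifted to the right universe. -/
abbrev LaxEpiX (f : A →* B) : Type (max u v w) :=
  ULift.{max u w} ((B ⧸ f.range) ⊕ Unit)

instance laxEpiSMul (f : A →* B) : SMul B (LaxEpiX.{w} f) where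
  smul b z := ULift.up (z.down.map (fun q => b • q) id)

instance laxEpiMulAction (f : A →* B) : MulAction B (LaxEpiX.{w} f) where
  one_smul z := by
    obtain ⟨d⟩ := z
    cases d with
    | inl r => show ULift.up (Sum.inl ((1 : B) • r)) = _; rw [one_smul]
    | inr u => rfl
  mul_smul b₁ b₂ z := by
    obtain ⟨d⟩ := z
    cases d with
    | inl r =>
        show ULift.up (Sum.inl ((b₁ * b₂) • r)) = ULift.up (Sum.inl (b₁ • b₂ • r))
        rw [mul_smul]
    | inr u => rfl

/-- The basepoint: the coset of the identity. -/
def laxP (f : A →* B) : LaxEpiX.{w} f := ULift.up (Sum.inl ((1 : B) : B ⧸ f.range))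

/-- The extra fixed point. -/
def laxQ (f : A →* B) : LaxEpiX.{w} f := ULift.up (Sum.inr ())

theorem laxEpi_smul_P (f : A →* B) {b : B} (hb : b ∈ f.range) :
    b • laxP.{w} f = laxP.{w} f := by
  show ULift.up (Sum.inl (b • ((1 : B) : B ⧸ f.range))) = _
  unfold laxP
  congr 1
  simp only [Sum.inl.injEq]
  rw [MulAction.Quotient.smul_mk]
  exact QuotientGroup.eq.mpr (by simpa using f.range.inv_mem hb)

theorem laxEpi_smul_Q (f : A →* B) (b : B) : b • laxQ.{w} f = laxQ.{w} f := rfl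

end LaxEpiAux

/-- A group homomorphism `f : A →* B` is surjective if and only if it is a lax epimorphism
in the 2-category of groups: for every group `C`, all homomorphisms `g h : B →* C` and every
`γ : C` satisfying `g (f x) * γ = γ * h (f x)` for all `x : A`, one has
`g y * γ = γ * h y` for all `y : B`. -/
theorem surjective_iff_laxEpi {A : Type u} {B : Type v} [Group A] [Group B] (f : A →* B) :
    Function.Surjective f ↔
      ∀ (C : Type (max u v w)) [Group C] (g h : B →* C) (γ : C),
        (∀ x : A, g (f x) * γ = γ * h (f x)) → ∀ y : B, g y * γ = γ * h y := by
  constructor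
  · intro hf C _ g h γ hγ y
    obtain ⟨x, rfl⟩ := hf y
    exact hγ x
  · intro H y
    classical
    have hfix : ∀ x : A,
        (MulAction.toPermHom B (LaxEpiX.{w} f)) (f x) * Equiv.swap (laxP.{w} f) (laxQ.{w} f)
          = Equiv.swap (laxP.{w} f) (laxQ.{w} f) * (MulAction.toPermHom B (LaxEpiX.{w} f)) (f x) := by
      intro x
      have hpfix : (MulAction.toPermHom B (LaxEpiX.{w} f)) (f x) (laxP.{w} f) = laxP.{w} f :=
        laxEpi_smul_P f ⟨x, rfl⟩
      have hqfix : (MulAction.toPermHom B (LaxEpiX.{w} f)) (f x) (laxQ.{w} f) = laxQ.{w} f := rfl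
      have h1 := Equiv.swap_apply_apply ((MulAction.toPermHom B (LaxEpiX.{w} f)) (f x))
        (laxP.{w} f) (laxQ.{w} f)
      rw [hpfix, hqfix] at h1
      conv_rhs => rw [h1]
      group
    have key := H (Equiv.Perm (LaxEpiX.{w} f)) (MulAction.toPermHom B (LaxEpiX.{w} f))
      (MulAction.toPermHom B (LaxEpiX.{w} f)) (Equiv.swap (laxP.{w} f) (laxQ.{w} f)) hfix y
    have h2 := Equiv.ext_iff.mp key (laxQ.{w} f)
    simp only [Equiv.Perm.mul_apply, Equiv.swap_apply_right] at h2
    have hq2 : ((MulAction.toPermHom B (LaxEpiX.{w} f)) y) (laxQ.{w} f) = laxQ.{w} f := rfl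
    rw [hq2, Equiv.swap_apply_right] at h2
    -- h2 : y • laxP f = laxP f
    have h3 : y • ((1 : B) : B ⧸ f.range) = ((1 : B) : B ⧸ f.range) := by
      have h2' : y • laxP.{w} f = laxP.{w} f := h2
      have := congrArg ULift.down h2'
      exact Sum.inl.inj this
    rw [MulAction.Quotient.smul_mk] at h3
    have h4 := QuotientGroup.eq.mp h3
    simp only [mul_one, mul_inv_rev, inv_inv] at h4
    exact f.range.inv_mem_iff.mp (by simpa using h4)
end

section
/- Let A and B be preorders and f : A → B a monotone map. Then the following are equivalent: (1) for every preorder C and all monotone maps g, h : B → C, if g(f(a)) ≤ h(f(a)) for all a ∈ A, then g(b) ≤ h(b) for all b ∈ B; (2) every element b ∈ B is isomorphic to f(a) for some a ∈ A, i.e., there exists a ∈ A with b ≤ f(a) and f(a) ≤ b. -/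
universe w u v

/-- A monotone map `f : A →o B` between preorders is a lax epimorphism in `Preord`
(i.e. an order-epimorphism) if and only if every `b : B` is isomorphic to `f a`
for some `a : A`. -/
theorem preorder_laxEpi_iff {A : Type u} {B : Type v} [Preorder A] [Preorder B] (f : A →o B) :
    (∀ (C : Type w) [Preorder C] (g h : B →o C),
        (∀ a : A, g (f a) ≤ h (f a)) → ∀ b : B, g b ≤ h b) ↔
      ∀ b : B, ∃ a : A, b ≤ f a ∧ f a ≤ b := by
  constructor
  · intro H b
    have key := H (ULift.{w} Prop)
      ⟨fun x => ⟨b ≤ x⟩, fun x y hxy hbx => le_trans hbx hxy⟩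
      ⟨fun x => ⟨∃ a : A, b ≤ f a ∧ f a ≤ x⟩,
        fun x y hxy ⟨a, h1, h2⟩ => ⟨a, h1, le_trans h2 hxy⟩⟩
      (fun a hba => ⟨a, hba, le_refl _⟩) b
    exact key (le_refl b)
  · intro H C _ g h hle b
    obtain ⟨a, h1, h2⟩ := H b
    calc g b ≤ g (f a) := g.monotone h1
      _ ≤ h (f a) := hle a
      _ ≤ h b := h.monotone h2
end

section
/- Let J : A ⥤ B be a functor between small categories (categories with objects and hom-sets in universe u). Then J is a lax epimorphism if and only if the precomposition functor (B ⥤ Type u) ⥤ (A ⥤ Type u), sending F to J ⋙ F, is full and faithful. -/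
open CategoryTheory Opposite

universe u

namespace CategoryTheory

section Aux

variable {A B : Type u} [SmallCategory A] [SmallCategory B]

/-- Auxiliary small category encoding two `Type u`-valued functors. -/
def PairCat (F G : B ⥤ Type u) : Type u := B ⊕ B

variable {F G : B ⥤ Type u}

def PairCat.el : PairCat F G → Type u
  | Sum.inl b => F.obj b
  | Sum.inr b => G.obj b

instance : SmallCategory (PairCat F G) where
  Hom X Y := X.el ⟶ Y.el
  id _ := 𝟙 _
  comp f g := f ≫ g

def PairCat.fst (F G : B ⥤ Type u) : B ⥤ PairCat F G where
  obj b := Sum.inl b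
  map f := F.map f
  map_id b := F.map_id b
  map_comp f g := F.map_comp f g

def PairCat.snd (F G : B ⥤ Type u) : B ⥤ PairCat F G where
  obj b := Sum.inr b
  map f := G.map f
  map_id b := G.map_id b
  map_comp f g := G.map_comp f g

end Aux

theorem Functor.isLaxEpi_iff_whiskeringLeft_type' {A B : Type u} [SmallCategory A]
    [SmallCategory B] (J : A ⥤ B) :
    (∀ (C : Type u) [SmallCategory C],
      (((whiskeringLeft A B C).obj J).Full ∧ ((whiskeringLeft A B C).obj J).Faithful)) ↔
      (((whiskeringLeft A B (Type u)).obj J).Full ∧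
        ((whiskeringLeft A B (Type u)).obj J).Faithful) := by
  constructor
  · intro h
    constructor
    · constructor
      intro F G γ
      obtain ⟨hfull, hfaith⟩ := h (PairCat F G)
      let γ' : ((whiskeringLeft A B (PairCat F G)).obj J).obj (PairCat.fst F G) ⟶
          ((whiskeringLeft A B (PairCat F G)).obj J).obj (PairCat.snd F G) :=
        { app := fun a => γ.app a
          naturality := fun {a a'} f => γ.naturality f }
      obtain ⟨α', hα'⟩ := hfull.map_surjective γ'
      refine ⟨{ app := fun b => α'.app b, naturality := fun {b b'} f => α'.naturality f }, ?_⟩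
      ext a : 2
      exact congrArg (fun t => t.app a) hα'
    · constructor
      intro F G α β hab
      obtain ⟨hfull, hfaith⟩ := h (PairCat F G)
      have : (⟨fun b => α.app b, fun {b b'} f => α.naturality f⟩ :
          PairCat.fst F G ⟶ PairCat.snd F G) =
          ⟨fun b => β.app b, fun {b b'} f => β.naturality f⟩ := by
        apply hfaith.map_injective
        ext a : 2
        exact congrArg (fun t => t.app a) hab
      have happ := congrArg NatTrans.app this
      exact NatTrans.ext (funext fun b => congrFun happ b)
  · rintro ⟨hfull, hfaith⟩
    intro C _
    constructor
    · constructor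
      intro F G γ
      let δ : ∀ c : C, (F ⋙ coyoneda.obj (op c)) ⟶ (G ⋙ coyoneda.obj (op c)) :=
        fun c => ((whiskeringLeft A B (Type u)).obj J).preimage
          (whiskerRight γ (coyoneda.obj (op c)) :
            J ⋙ (F ⋙ coyoneda.obj (op c)) ⟶ J ⋙ (G ⋙ coyoneda.obj (op c)))
      have hδ : ∀ (c : C) (a : A) (x : c ⟶ F.obj (J.obj a)),
          (δ c).app (J.obj a) x = x ≫ γ.app a := by
        intro c a x
        have h := Functor.map_preimage ((whiskeringLeft A B (Type u)).obj J)
          (X := F ⋙ coyoneda.obj (op c)) (Y := G ⋙ coyoneda.obj (op c))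
          (whiskerRight γ (coyoneda.obj (op c)))
        exact congrFun (congrArg (fun t => t.app a) h) x
      have hnat : ∀ {c c' : C} (h : c ⟶ c') (b : B) (x : c' ⟶ F.obj b),
          (δ c).app b (h ≫ x) = h ≫ (δ c').app b x := by
        intro c c' h b x
        have key : (whiskerLeft F (coyoneda.map h.op) ≫ δ c :
            F ⋙ coyoneda.obj (op c') ⟶ G ⋙ coyoneda.obj (op c)) =
            δ c' ≫ whiskerLeft G (coyoneda.map h.op) := by
          apply hfaith.map_injective
          ext a y
          simp [hδ]
        exact congrFun (congrArg (fun t => t.app b) key) x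
      refine ⟨{ app := fun b => (δ (F.obj b)).app b (𝟙 _), naturality := ?_ }, ?_⟩
      · intro b b' f
        have h1 := hnat (F.map f) b' (𝟙 (F.obj b'))
        have h2 := congrArg (fun t => t (𝟙 (F.obj b))) ((δ (F.obj b)).naturality f)
        simp only [Category.comp_id] at h1
        simp only [Functor.comp_map, Functor.flip_obj_map, yoneda_map_app, TypeCat.ofHom_apply,
          types_comp_apply,
          Category.id_comp] at h2
        show F.map f ≫ (δ (F.obj b')).app b' (𝟙 _) = (δ (F.obj b)).app b (𝟙 _) ≫ G.map f
        rw [← h1]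
        exact h2
      · ext a : 2
        have := hδ (F.obj (J.obj a)) a (𝟙 _)
        simpa using this
    · constructor
      intro F G α β hab
      ext b : 2
      have key : (whiskerRight α (coyoneda.obj (op (F.obj b))) :
          F ⋙ coyoneda.obj (op (F.obj b)) ⟶ G ⋙ coyoneda.obj (op (F.obj b))) =
          whiskerRight β (coyoneda.obj (op (F.obj b))) := by
        apply hfaith.map_injective
        ext a x
        have h3 : α.app (J.obj a) = β.app (J.obj a) :=
          congrArg (fun t => NatTrans.app t a) hab
        simp [h3]
      have := congrFun (congrArg (fun t => t.app b) key) (𝟙 (F.obj b))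
      simpa using this

/-- A functor `J : A ⥤ B` between small categories is a *lax epimorphism* (in the 2-category
`Cat` of small categories) if for every category `C`, the precomposition functor
`(B ⥤ C) ⥤ (A ⥤ C)` given by whiskering on the left with `J` is full and faithful. -/
def Functor.IsLaxEpi {A B : Type u} [SmallCategory A] [SmallCategory B] (J : A ⥤ B) : Prop :=
  ∀ (C : Type u) [SmallCategory C],
    (((whiskeringLeft A B C).obj J).Full ∧ ((whiskeringLeft A B C).obj J).Faithful)

/-- A functor `J : A ⥤ B` between small categories is a lax epimorphism if and only if the
precomposition functor `(B ⥤ Type u) ⥤ (A ⥤ Type u)`, `F ↦ J ⋙ F`, is full and faithful. -/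
theorem Functor.isLaxEpi_iff_whiskeringLeft_type {A B : Type u} [SmallCategory A]
    [SmallCategory B] (J : A ⥤ B) :
    J.IsLaxEpi ↔
      (((whiskeringLeft A B (Type u)).obj J).Full ∧
        ((whiskeringLeft A B (Type u)).obj J).Faithful) :=
  Functor.isLaxEpi_iff_whiskeringLeft_type' J

end CategoryTheory
end

section
/- Let J : A ⥤ B be a functor between small categories. Then J is a lax epimorphism if and only if the Yoneda embedding Y : B ⥤ (Bᵒᵖ ⥤ Type), together with the identity natural transformation on J ⋙ Y, exhibits Y as a (pointwise) left Kan extension of J ⋙ Y along J. -/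
open CategoryTheory

universe u

universe v₁ v₂ v₃ u₁ u₂ u₃

open Limits

open Functor

namespace CategoryTheory

namespace LaxEpiAux

section Flip

variable {C : Type u₁} {D : Type u₂} {E : Type u₃}
  [Category.{v₁} C] [Category.{v₂} D] [Category.{v₃} E]

/-- Flipping natural transformations. -/
@[simps]
def flipEquiv (F G : C ⥤ D ⥤ E) : (F ⟶ G) ≃ (F.flip ⟶ G.flip) where
  toFun γ :=
    { app := fun d =>
        { app := fun c => (γ.app c).app d
          naturality := fun _ _ f => NatTrans.congr_app (γ.naturality f) d }
      naturality := fun _ _ g => by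
        ext c
        exact (γ.app c).naturality g }
  invFun δ :=
    { app := fun c =>
        { app := fun d => (δ.app d).app c
          naturality := fun _ _ g => NatTrans.congr_app (δ.naturality g) c }
      naturality := fun _ _ f => by
        ext d
        exact (δ.app d).naturality f }
  left_inv γ := rfl
  right_inv δ := rfl

end Flip

variable {A B : Type u} [SmallCategory A] [SmallCategory B] (J : A ⥤ B)

section Transport

variable {C : Type u₁} {C' : Type u₂} [Category.{v₁} C] [Category.{v₂} C']

/-- Transport bijectivity of restriction along a fully faithful postcomposition. -/
lemma transport (R : C ⥤ C') [R.Full] [R.Faithful] (M N : B ⥤ C)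
    (h : Function.Bijective fun (γ : M ⟶ N) => whiskerLeft J γ) :
    Function.Bijective fun (γ : M ⋙ R ⟶ N ⋙ R) => whiskerLeft J γ := by
  let WR := (whiskeringRight B C C').obj R
  let WR' := (whiskeringRight A C C').obj R
  have bWR : Function.Bijective (WR.map : (M ⟶ N) → _) :=
    ⟨WR.map_injective, WR.map_surjective⟩
  have bWR' : Function.Bijective (WR'.map : (J ⋙ M ⟶ J ⋙ N) → _) :=
    ⟨WR'.map_injective, WR'.map_surjective⟩
  have key : (fun (γ : M ⋙ R ⟶ N ⋙ R) => whiskerLeft J γ) =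
      (fun (γ : (J ⋙ M) ⋙ R ⟶ (J ⋙ N) ⋙ R) => γ) ∘ WR'.map ∘
        (fun (γ : M ⟶ N) => whiskerLeft J γ) ∘
        (Equiv.ofBijective _ bWR).symm := by
    funext δ
    have : δ = WR.map ((Equiv.ofBijective _ bWR).symm δ) :=
      ((Equiv.ofBijective _ bWR).apply_symm_apply δ).symm
    conv_lhs => rw [this]
    rfl
  rw [key]
  exact (Function.bijective_id.comp bWR').comp
    (h.comp (Equiv.ofBijective _ bWR).symm.bijective)

end Transport

lemma type_bij (h : J.IsLaxEpi) (P Q : B ⥤ Type u) :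
    Function.Bijective (fun (γ : P ⟶ Q) => whiskerLeft J γ) := by
  let Cset : B ⊕ B → Type u := Sum.elim P.obj Q.obj
  let P' : B ⥤ InducedCategory (Type u) Cset :=
    { obj := fun b => Sum.inl b
      map := fun f => InducedCategory.homMk (P.map f)
      map_id := fun b => InducedCategory.hom_ext (P.map_id b)
      map_comp := fun f g => InducedCategory.hom_ext (P.map_comp f g) }
  let Q' : B ⥤ InducedCategory (Type u) Cset :=
    { obj := fun b => Sum.inr b
      map := fun f => InducedCategory.homMk (Q.map f)
      map_id := fun b => InducedCategory.hom_ext (Q.map_id b)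
      map_comp := fun f g => InducedCategory.hom_ext (Q.map_comp f g) }
  obtain ⟨hfull, hfaith⟩ := h (InducedCategory (Type u) Cset)
  have hbij : Function.Bijective (fun (γ : P' ⟶ Q') => whiskerLeft J γ) := by
    letI := hfull; letI := hfaith
    exact ⟨((whiskeringLeft A B _).obj J).map_injective,
      ((whiskeringLeft A B _).obj J).map_surjective⟩
  exact transport J (inducedFunctor Cset) P' Q' hbij

lemma psh_bij (hfull : ((whiskeringLeft A B (Type u)).obj J).Full)
    (hfaith : ((whiskeringLeft A B (Type u)).obj J).Faithful)
    (F G : B ⥤ (Bᵒᵖ ⥤ Type u)) :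
    Function.Bijective (fun (γ : F ⟶ G) => whiskerLeft J γ) := by
  letI := hfull; letI := hfaith
  let W := (whiskeringLeft A B (Type u)).obj J
  let WW := (whiskeringRight Bᵒᵖ (B ⥤ Type u) (A ⥤ Type u)).obj W
  have bWW : Function.Bijective (WW.map : (F.flip ⟶ G.flip) → _) :=
    ⟨WW.map_injective, WW.map_surjective⟩
  have key : (fun (γ : F ⟶ G) => whiskerLeft J γ) =
      (flipEquiv (J ⋙ F) (J ⋙ G)).symm ∘
        (fun (δ : F.flip ⟶ G.flip) =>
          (WW.map δ : (J ⋙ F).flip ⟶ (J ⋙ G).flip)) ∘ (flipEquiv F G) := by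
    funext γ
    apply (flipEquiv (J ⋙ F) (J ⋙ G)).injective
    simp only [Function.comp_apply, Equiv.apply_symm_apply]
    rfl
  rw [key]
  exact ((flipEquiv (J ⋙ F) (J ⋙ G)).symm.bijective.comp bWW).comp
    (flipEquiv F G).bijective

lemma isLKE_iff :
    yoneda.IsLeftKanExtension ((𝟙 (J ⋙ yoneda)) : J ⋙ yoneda ⟶ J ⋙ yoneda) ↔
      ∀ (G : B ⥤ (Bᵒᵖ ⥤ Type u)),
        Function.Bijective (fun (γ : yoneda ⟶ G) => whiskerLeft J γ) := by
  constructor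
  · intro h G
    have he : (fun (γ : yoneda ⟶ G) => whiskerLeft J γ) =
        (yoneda.homEquivOfIsLeftKanExtension
          ((𝟙 (J ⋙ yoneda)) : J ⋙ yoneda ⟶ J ⋙ yoneda) G) := by
      funext γ
      exact (Category.id_comp _).symm
    rw [he]
    exact Equiv.bijective _
  · intro h
    refine ⟨⟨IsInitial.ofUniqueHom (fun G => ?_) (fun G m => ?_)⟩⟩
    · exact StructuredArrow.homMk ((h G.right).2 G.hom).choose
        ((Category.id_comp _).trans ((h G.right).2 G.hom).choose_spec)
    · ext : 1
      apply (h G.right).1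
      have h2 : whiskerLeft J (((h G.right).2 G.hom).choose) = G.hom :=
        ((h G.right).2 G.hom).choose_spec
      have h3 : whiskerLeft J m.right = G.hom := (Category.id_comp _).symm.trans m.w
      simp only [StructuredArrow.homMk_right]
      show whiskerLeft J m.right = whiskerLeft J (((h G.right).2 G.hom).choose)
      rw [h2, h3]

section Key

variable {C : Type u} [SmallCategory C]

/-- The auxiliary presheaf-valued hom functor `b ↦ (b' ↦ (M b' ⟶ N b))`. -/
def Hfun (M N : B ⥤ C) : B ⥤ (Bᵒᵖ ⥤ Type u) :=
  N ⋙ yoneda ⋙ (whiskeringLeft Bᵒᵖ Cᵒᵖ (Type u)).obj M.op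

/-- Natural transformations `M ⟶ N` correspond to `yoneda ⟶ Hfun M N`. -/
def e0 (M N : B ⥤ C) : (M ⟶ N) ≃ (yoneda ⟶ Hfun M N) where
  toFun φ :=
    { app := fun b =>
        { app := fun b' => TypeCat.ofHom fun (f : b'.unop ⟶ b) => M.map f ≫ φ.app b
          naturality := by
            intro b₁ b₂ h
            ext f
            dsimp [Hfun]
            simp }
      naturality := by
        intro b c g
        ext b' f
        dsimp [Hfun]
        simp [φ.naturality g] }
  invFun γ :=
    { app := fun b => (γ.app b).app (Opposite.op b) (𝟙 b)
      naturality := by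
        intro b c f
        have h1 := types_congr_hom (NatTrans.congr_app (γ.naturality f) (Opposite.op b)) (𝟙 b)
        have h2 := types_congr_hom ((γ.app c).naturality (f.op : Opposite.op c ⟶ Opposite.op b)) (𝟙 c)
        simp only [NatTrans.comp_app, types_comp_apply] at h1 h2
        simp [Hfun] at h1 h2 ⊢
        exact h2.symm.trans h1 }
  left_inv φ := by
    ext b
    change M.map (𝟙 b) ≫ φ.app b = φ.app b
    simp
  right_inv γ := by
    ext b b' f
    have := types_congr_hom ((γ.app b).naturality (f.op : Opposite.op b ⟶ b')) (𝟙 b)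
    simp only [types_comp_apply] at this
    simp [Hfun] at this ⊢
    exact this.symm

/-- Restricted version of `e0` along `J`. -/
def eJ (M N : B ⥤ C) : (J ⋙ M ⟶ J ⋙ N) ≃ (J ⋙ yoneda ⟶ J ⋙ Hfun M N) where
  toFun ψ :=
    { app := fun a =>
        { app := fun b' => TypeCat.ofHom fun (f : b'.unop ⟶ J.obj a) => M.map f ≫ ψ.app a
          naturality := by
            intro b₁ b₂ h
            ext f
            dsimp [Hfun]
            simp }
      naturality := by
        intro a a' g
        ext b' f
        dsimp [Hfun]
        simp only [Category.id_comp, Category.comp_id, Functor.map_comp, Category.assoc]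
        have hn := ψ.naturality g
        dsimp at hn
        rw [hn] }
  invFun δ :=
    { app := fun a => (δ.app a).app (Opposite.op (J.obj a)) (𝟙 (J.obj a))
      naturality := by
        intro a a' g
        have h1 := types_congr_hom (NatTrans.congr_app (δ.naturality g)
          (Opposite.op (J.obj a))) (𝟙 (J.obj a))
        have h2 := types_congr_hom ((δ.app a').naturality
          ((J.map g).op : Opposite.op (J.obj a') ⟶ Opposite.op (J.obj a))) (𝟙 (J.obj a'))
        simp only [NatTrans.comp_app, types_comp_apply] at h1 h2
        simp [Hfun] at h1 h2 ⊢
        exact h2.symm.trans h1 }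
  left_inv ψ := by
    ext a
    change M.map (𝟙 (J.obj a)) ≫ ψ.app a = ψ.app a
    simp
  right_inv δ := by
    ext a b' f
    have := types_congr_hom ((δ.app a).naturality (f.op : Opposite.op (J.obj a) ⟶ b')) (𝟙 (J.obj a))
    simp only [types_comp_apply] at this
    simp [Hfun] at this ⊢
    exact this.symm

lemma eJ_whisker (M N : B ⥤ C) (φ : M ⟶ N) :
    eJ J M N (whiskerLeft J φ) = whiskerLeft J (e0 M N φ) := rfl

lemma bij_of_yoneda_bij (M N : B ⥤ C)
    (hy : Function.Bijective fun (γ : yoneda ⟶ Hfun M N) => whiskerLeft J γ) :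
    Function.Bijective fun (γ : M ⟶ N) => whiskerLeft J γ := by
  have key : (fun (γ : M ⟶ N) => whiskerLeft J γ) =
      (eJ J M N).symm ∘ (fun (γ : yoneda ⟶ Hfun M N) => whiskerLeft J γ) ∘ (e0 M N) := by
    funext φ
    apply (eJ J M N).injective
    simp only [Function.comp_apply, Equiv.apply_symm_apply]
    exact eJ_whisker J M N φ
  rw [key]
  exact ((eJ J M N).symm.bijective.comp hy).comp (e0 M N).bijective

end Key

end LaxEpiAux

/-- A functor `J : A ⥤ B` between small categories is a lax epimorphism if and only if the
Yoneda embedding `Y : B ⥤ (Bᵒᵖ ⥤ Type u)`, together with the identity natural transformation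
on `J ⋙ Y`, exhibits `Y` as a left Kan extension of `J ⋙ Y` along `J`. -/
theorem Functor.isLaxEpi_iff_yoneda_isLeftKanExtension {A B : Type u} [SmallCategory A]
    [SmallCategory B] (J : A ⥤ B) :
    J.IsLaxEpi ↔
      yoneda.IsLeftKanExtension ((𝟙 (J ⋙ yoneda)) : J ⋙ yoneda ⟶ J ⋙ yoneda) := by
  rw [LaxEpiAux.isLKE_iff]
  constructor
  · intro h G
    have hfull : ((whiskeringLeft A B (Type u)).obj J).Full :=
      ⟨fun {P Q} δ => (LaxEpiAux.type_bij J h P Q).2 δ⟩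
    have hfaith : ((whiskeringLeft A B (Type u)).obj J).Faithful :=
      ⟨fun {P Q} _ _ hh => (LaxEpiAux.type_bij J h P Q).1 hh⟩
    exact LaxEpiAux.psh_bij J hfull hfaith yoneda G
  · intro h C instC
    exact ⟨⟨fun {M N} δ => (LaxEpiAux.bij_of_yoneda_bij J M N (h (LaxEpiAux.Hfun M N))).2 δ⟩,
      ⟨fun {M N} _ _ hh => (LaxEpiAux.bij_of_yoneda_bij J M N (h (LaxEpiAux.Hfun M N))).1 hh⟩⟩

end CategoryTheory
end

section
/- Let J : A ⥤ B be a functor between small categories (with objects and hom-sets in universe u). Then the precomposition functor (B ⥤ Type u) ⥤ (A ⥤ Type u) is full and faithful if and only if for every category C, of arbitrary (possibly larger) universe, the precomposition functor (B ⥤ C) ⥤ (A ⥤ C) is full and faithful. -/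
open CategoryTheory

universe w v u

namespace WLFFAux

open Opposite

variable {A B : Type u} [SmallCategory A] [SmallCategory B] (J : A ⥤ B) (b₀ : B)

/-- An element representing a point of the pointwise left Kan extension of `B(b₀, J -)`
along `J`, at `b`. -/
structure Elt (b : B) : Type u where
  a : A
  g : b₀ ⟶ J.obj a
  f : J.obj a ⟶ b

/-- The generating relation for the colimit defining the left Kan extension. -/
def rel (b : B) : Elt J b₀ b → Elt J b₀ b → Prop := fun e e' =>
  ∃ t : e.a ⟶ e'.a, e'.g = e.g ≫ J.map t ∧ e.f = J.map t ≫ e'.f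

/-- The pointwise left Kan extension of `B(b₀, J -)` along `J`, constructed by hand. -/
def P : B ⥤ Type u where
  obj b := Quot (rel J b₀ b)
  map {b b'} h := TypeCat.ofHom (Quot.lift
    (fun (e : Elt J b₀ b) => Quot.mk (rel J b₀ b') (⟨e.a, e.g, e.f ≫ h⟩ : Elt J b₀ b'))
    (fun e e' ⟨t, h1, h2⟩ => Quot.sound ⟨t, h1, by rw [h2, Category.assoc]⟩))
  map_id b := by
    ext x
    obtain ⟨e, rfl⟩ := Quot.exists_rep x
    show Quot.mk (rel J b₀ b) (Elt.mk e.a e.g (e.f ≫ 𝟙 b)) = Quot.mk (rel J b₀ b) e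
    rw [Category.comp_id]
  map_comp {b b' b''} h h' := by
    ext x
    obtain ⟨e, rfl⟩ := Quot.exists_rep x
    show Quot.mk (rel J b₀ b'') (Elt.mk e.a e.g (e.f ≫ (h ≫ h')))
        = Quot.mk (rel J b₀ b'') (Elt.mk e.a e.g ((e.f ≫ h) ≫ h'))
    rw [Category.assoc]

lemma P_map_mk {b b' : B} (h : b ⟶ b') (e : Elt J b₀ b) :
    (P J b₀).map h (Quot.mk _ e) = Quot.mk _ (⟨e.a, e.g, e.f ≫ h⟩ : Elt J b₀ b') := rfl

/-- The "evaluation" natural transformation from `P` to `B(b₀, -)`. -/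
def ε : P J b₀ ⟶ coyoneda.obj (op b₀) where
  app b := TypeCat.ofHom (Quot.lift (fun (e : Elt J b₀ b) => (e.g ≫ e.f : b₀ ⟶ b))
    (fun e e' ⟨t, h1, h2⟩ => by
      show e.g ≫ e.f = e'.g ≫ e'.f
      rw [h1, h2, Category.assoc]))
  naturality b b' h := by
    ext x
    obtain ⟨e, rfl⟩ := Quot.exists_rep x
    show e.g ≫ (e.f ≫ h) = (e.g ≫ e.f) ≫ h
    rw [Category.assoc]

/-- The unit natural transformation. -/
def η : J ⋙ coyoneda.obj (op b₀) ⟶ J ⋙ P J b₀ where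
  app a := TypeCat.ofHom (fun (g : b₀ ⟶ J.obj a) =>
    Quot.mk (rel J b₀ (J.obj a)) (⟨a, g, 𝟙 _⟩ : Elt J b₀ (J.obj a)))
  naturality a a' t := by
    ext g
    show Quot.mk (rel J b₀ (J.obj a')) (Elt.mk a' (g ≫ J.map t) (𝟙 _))
        = Quot.mk (rel J b₀ (J.obj a')) (Elt.mk a g (𝟙 _ ≫ J.map t))
    exact (Quot.sound ⟨t, rfl, by simp⟩).symm

variable (hfull : (((Functor.whiskeringLeft A B (Type u)).obj J)).Full)
  (hfaith : (((Functor.whiskeringLeft A B (Type u)).obj J)).Faithful)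

include hfull hfaith in
lemma eps_app_bijective (b : B) : Function.Bijective ((ε J b₀).app b) := by
  obtain ⟨δ, hδ⟩ := hfull.map_surjective (η J b₀)
  have h1 : δ ≫ ε J b₀ = 𝟙 _ := by
    apply hfaith.map_injective
    rw [Functor.map_comp, CategoryTheory.Functor.map_id, hδ]
    ext a g
    show (ε J b₀).app (J.obj a) (Quot.mk _ ⟨a, g, 𝟙 _⟩) = g
    show g ≫ 𝟙 _ = g
    rw [Category.comp_id]
  have h2 : ε J b₀ ≫ δ = 𝟙 (P J b₀) := by
    ext b x
    obtain ⟨e, rfl⟩ := Quot.exists_rep x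
    show δ.app b (e.g ≫ e.f) = Quot.mk _ e
    have hnat : δ.app b ((coyoneda.obj (op b₀)).map e.f e.g)
        = (P J b₀).map e.f (δ.app (J.obj e.a) e.g) := types_congr_hom (δ.naturality e.f) e.g
    have hδa : δ.app (J.obj e.a) e.g = Quot.mk _ ⟨e.a, e.g, 𝟙 _⟩ :=
      types_congr_hom (congrArg (fun n => NatTrans.app n e.a) hδ) e.g
    refine hnat.trans ?_
    rw [hδa]
    show Quot.mk (rel J b₀ b) (⟨e.a, e.g, 𝟙 _ ≫ e.f⟩ : Elt J b₀ b) = _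
    rw [Category.id_comp]
  have hli : ∀ x, δ.app b ((ε J b₀).app b x) = x :=
    fun x => types_congr_hom (congrArg (fun n => NatTrans.app n b) h2) x
  have hri : ∀ y, (ε J b₀).app b (δ.app b y) = y :=
    fun y => types_congr_hom (congrArg (fun n => NatTrans.app n b) h1) y
  exact Function.bijective_iff_has_inverse.mpr ⟨δ.app b, hli, hri⟩

include hfull hfaith in
lemma exists_retract (b : B) :
    ∃ (a : A) (g : b ⟶ J.obj a) (f : J.obj a ⟶ b), g ≫ f = 𝟙 b := by
  obtain ⟨x, hx⟩ := (eps_app_bijective J b hfull hfaith b).2 (𝟙 b)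
  obtain ⟨e, rfl⟩ := Quot.exists_rep x
  exact ⟨e.a, e.g, e.f, hx⟩

include hfull hfaith in
lemma key_invariance {C : Type*} [Category C] (FF GG : B ⥤ C) (α : J ⋙ FF ⟶ J ⋙ GG)
    {b : B} (e e' : Elt J b₀ b) (h : e.g ≫ e.f = e'.g ≫ e'.f) :
    FF.map e.g ≫ α.app e.a ≫ GG.map e.f = FF.map e'.g ≫ α.app e'.a ≫ GG.map e'.f := by
  have hq : Quot.mk (rel J b₀ b) e = Quot.mk (rel J b₀ b) e' :=
    (eps_app_bijective J b₀ hfull hfaith b).1 h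
  let Φ : Quot (rel J b₀ b) → (FF.obj b₀ ⟶ GG.obj b) :=
    Quot.lift (fun e => FF.map e.g ≫ α.app e.a ≫ GG.map e.f)
      (fun e e' hrel => by
        obtain ⟨t, h1, h2⟩ := hrel
        have hn : α.app e.a ≫ GG.map (J.map t) = FF.map (J.map t) ≫ α.app e'.a :=
          (α.naturality t).symm
        show FF.map e.g ≫ α.app e.a ≫ GG.map e.f
            = FF.map e'.g ≫ α.app e'.a ≫ GG.map e'.f
        calc FF.map e.g ≫ α.app e.a ≫ GG.map e.f
            = FF.map e.g ≫ (α.app e.a ≫ GG.map (J.map t)) ≫ GG.map e'.f := by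
              rw [h2, GG.map_comp]; simp only [Category.assoc]
          _ = FF.map e.g ≫ (FF.map (J.map t) ≫ α.app e'.a) ≫ GG.map e'.f := by rw [hn]
          _ = FF.map e'.g ≫ α.app e'.a ≫ GG.map e'.f := by
              rw [h1, FF.map_comp]; simp only [Category.assoc])
  exact congrArg Φ hq

end WLFFAux

namespace WLFFRev

variable {A B : Type u} [SmallCategory A] [SmallCategory B] (F G : B ⥤ Type u)

/-- Objects of the auxiliary category: two copies of `B`, lifted to universe `max u w`. -/
def Obj (_ _ : B ⥤ Type u) : Type (max u w) := ULift.{w} (B ⊕ B)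

/-- The type associated to each object. -/
def φ : Obj.{w} F G → Type u := fun X => Sum.elim F.obj G.obj X.down

instance : Category.{max u v} (Obj.{w} F G) where
  Hom X Y := ULift.{max u v} (φ F G X ⟶ φ F G Y)
  id X := ⟨𝟙 (φ F G X)⟩
  comp f g := ⟨f.down ≫ g.down⟩

/-- The first copy of `B` maps to `Obj` via `F`. -/
def Fbar : B ⥤ Obj.{w} F G where
  obj b := ⟨Sum.inl b⟩
  map f := ⟨F.map f⟩
  map_id b := congrArg ULift.up (F.map_id b)
  map_comp f g := congrArg ULift.up (F.map_comp f g)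

/-- The second copy of `B` maps to `Obj` via `G`. -/
def Gbar : B ⥤ Obj.{w} F G where
  obj b := ⟨Sum.inr b⟩
  map f := ⟨G.map f⟩
  map_id b := congrArg ULift.up (G.map_id b)
  map_comp f g := congrArg ULift.up (G.map_comp f g)

/-- Lift a natural transformation `F ⟶ G` to `Fbar ⟶ Gbar`. -/
def liftNat (β : F ⟶ G) : Fbar F G ⟶ Gbar F G where
  app b := ⟨β.app b⟩
  naturality b b' f := congrArg ULift.up (β.naturality f)

end WLFFRev

/-- For a functor `J : A ⥤ B` between small categories, the precomposition functor
`(B ⥤ Type u) ⥤ (A ⥤ Type u)` is full and faithful if and only if for every category `C`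
of arbitrary (possibly larger) universe, the precomposition functor `(B ⥤ C) ⥤ (A ⥤ C)`
is full and faithful. -/
theorem whiskeringLeft_type_full_faithful_iff_all {A B : Type u} [SmallCategory A]
    [SmallCategory B] (J : A ⥤ B) :
    (((Functor.whiskeringLeft A B (Type u)).obj J).Full ∧
        ((Functor.whiskeringLeft A B (Type u)).obj J).Faithful) ↔
      ∀ (C : Type (max u w)) [Category.{max u v} C],
        (((Functor.whiskeringLeft A B C).obj J).Full ∧ ((Functor.whiskeringLeft A B C).obj J).Faithful) := by
  constructor
  · rintro ⟨hfull, hfaith⟩ C _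
    have ret := WLFFAux.exists_retract J hfull hfaith
    choose a₀ g₀ f₀ hret using ret
    constructor
    · refine ⟨fun {F G} α => ?_⟩
      refine ⟨{
        app := fun b => F.map (g₀ b) ≫ α.app (a₀ b) ≫ G.map (f₀ b)
        naturality := fun b b' h => ?_ }, ?_⟩
      · have := WLFFAux.key_invariance J b hfull hfaith F G α
          (e := ⟨a₀ b', h ≫ g₀ b', f₀ b'⟩) (e' := ⟨a₀ b, g₀ b, f₀ b ≫ h⟩)
          (by simp only [Category.assoc, hret b']
              rw [Category.comp_id, ← Category.assoc, hret b, Category.id_comp])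
        simpa using this
      · ext a
        have := WLFFAux.key_invariance J (J.obj a) hfull hfaith F G α
          (e := ⟨a₀ (J.obj a), g₀ (J.obj a), f₀ (J.obj a)⟩) (e' := ⟨a, 𝟙 _, 𝟙 _⟩)
          (by simp [hret])
        simpa using this
    · refine ⟨fun {F G} β γ hβγ => ?_⟩
      ext b
      have hb : β.app (J.obj (a₀ b)) = γ.app (J.obj (a₀ b)) :=
        congrArg (fun n => NatTrans.app n (a₀ b)) hβγ
      have nb := β.naturality (f₀ b)
      have ng := γ.naturality (f₀ b)
      calc β.app b = F.map (g₀ b ≫ f₀ b) ≫ β.app b := by rw [hret b]; simp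
        _ = F.map (g₀ b) ≫ β.app (J.obj (a₀ b)) ≫ G.map (f₀ b) := by
            rw [F.map_comp, Category.assoc, nb]
        _ = F.map (g₀ b) ≫ γ.app (J.obj (a₀ b)) ≫ G.map (f₀ b) := by rw [hb]
        _ = F.map (g₀ b ≫ f₀ b) ≫ γ.app b := by rw [F.map_comp, Category.assoc, ng]
        _ = γ.app b := by rw [hret b]; simp
  · intro h
    constructor
    · refine ⟨fun {F G} α => ?_⟩
      obtain ⟨hCfull, hCfaith⟩ := h (WLFFRev.Obj.{w} F G)
      let liftα : J ⋙ WLFFRev.Fbar F G ⟶ J ⋙ WLFFRev.Gbar F G :=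
        { app := fun a => ⟨α.app a⟩
          naturality := fun a a' t => congrArg ULift.up (α.naturality t) }
      obtain ⟨Bb, hBb⟩ := hCfull.map_surjective liftα
      refine ⟨{
        app := fun b => (Bb.app b).down
        naturality := fun b b' f => congrArg ULift.down (Bb.naturality f) }, ?_⟩
      exact NatTrans.ext (funext fun a =>
        congrArg (fun (n : J ⋙ WLFFRev.Fbar F G ⟶ J ⋙ WLFFRev.Gbar F G) =>
          (NatTrans.app n a).down) hBb)
    · refine ⟨fun {F G} β γ hβγ => ?_⟩
      obtain ⟨hCfull, hCfaith⟩ := h (WLFFRev.Obj.{w} F G)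
      have key : WLFFRev.liftNat F G β = WLFFRev.liftNat F G γ := by
        apply hCfaith.map_injective
        ext a
        exact congrArg (fun n => ULift.up.{max u v} (NatTrans.app n a)) hβγ
      exact NatTrans.ext (funext fun b =>
        congrArg (fun (n : WLFFRev.Fbar F G ⟶ WLFFRev.Gbar F G) => (NatTrans.app n b).down) key)
end

section
/- A functor J : A ⥤ B between small categories is a lax epimorphism if and only if J is absolutely dense, i.e.: (i) the identity functor 𝟭_B, together with the identity natural transformation on J, is a left Kan extension of J along J; and (ii) this left Kan extension is preserved by every functor into Type: for every functor F : B ⥤ Type, the functor F together with the identity natural transformation on J ⋙ F is a left Kan extension of J ⋙ F along J. -/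
open CategoryTheory

universe u

namespace CategoryTheory

section Helpers

variable {A B E : Type*} [Category A] [Category B] [Category E]

/-- If whiskering with `J` is fully faithful, then any iso `K ⟶ J ⋙ F` exhibits `F` as a
left Kan extension of `K` along `J`. -/
lemma isLeftKanExtension_of_whiskeringLeft_ff (J : A ⥤ B)
    (hfull : ((Functor.whiskeringLeft A B E).obj J).Full)
    (hfaith : ((Functor.whiskeringLeft A B E).obj J).Faithful)
    (F : B ⥤ E) {K : A ⥤ E} (α : K ⟶ J ⋙ F) [IsIso α] :
    F.IsLeftKanExtension α := by
  haveI := hfull; haveI := hfaith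
  set W := (Functor.whiskeringLeft A B E).obj J with hW
  constructor
  refine ⟨Limits.IsInitial.ofUniqueHom
    (fun Y => StructuredArrow.homMk (W.preimage ((inv α : J ⋙ F ⟶ K) ≫ Y.hom)) (by
      show α ≫ W.map (W.preimage ((inv α : J ⋙ F ⟶ K) ≫ Y.hom)) = Y.hom
      rw [Functor.map_preimage, IsIso.hom_inv_id_assoc])) (fun Y m => ?_)⟩
  apply StructuredArrow.hom_ext
  apply hfaith.map_injective
  show (W.map m.right : J ⋙ F ⟶ J ⋙ Y.right) =
    (W.map (W.preimage ((inv α : J ⋙ F ⟶ K) ≫ Y.hom)) : J ⋙ F ⟶ J ⋙ Y.right)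
  rw [Functor.map_preimage, ← cancel_epi α, IsIso.hom_inv_id_assoc]
  exact StructuredArrow.w m

/-- Converse: if each `F` is a left Kan extension of `J ⋙ F` via the identity, whiskering
is fully faithful. -/
lemma whiskeringLeft_ff_of_lke (J : A ⥤ B)
    (h : ∀ F : B ⥤ E, F.IsLeftKanExtension (𝟙 (J ⋙ F))) :
    ((Functor.whiskeringLeft A B E).obj J).Full ∧ ((Functor.whiskeringLeft A B E).obj J).Faithful := by
  constructor
  · constructor
    intro F G β
    haveI := h F
    refine ⟨F.descOfIsLeftKanExtension (𝟙 (J ⋙ F)) G β, ?_⟩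
    have := F.descOfIsLeftKanExtension_fac (𝟙 (J ⋙ F)) G β
    rw [Category.id_comp] at this
    exact this
  · constructor
    intro F G γ₁ γ₂ hγ
    haveI := h F
    refine F.hom_ext_of_isLeftKanExtension (𝟙 (J ⋙ F)) γ₁ γ₂ ?_
    rw [Category.id_comp, Category.id_comp]
    exact hγ

end Helpers

section Transfer

variable {A B : Type u} [SmallCategory A] [SmallCategory B]

/-- Full and faithfulness of whiskering into `Type u` implies it for any category with
`u`-small homs. -/
lemma whiskeringLeft_ff_transfer (J : A ⥤ B)
    (hfull : ((Functor.whiskeringLeft A B (Type u)).obj J).Full)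
    (hfaith : ((Functor.whiskeringLeft A B (Type u)).obj J).Faithful)
    (C : Type*) [Category.{u} C] :
    ((Functor.whiskeringLeft A B C).obj J).Full ∧ ((Functor.whiskeringLeft A B C).obj J).Faithful := by
  haveI := hfull; haveI := hfaith
  set W := (Functor.whiskeringLeft A B (Type u)).obj J with hWdef
  constructor
  · constructor
    intro F G β
    -- Type-valued shadows
    set γ : ∀ c : C, (F ⋙ coyoneda.obj (Opposite.op c)) ⟶
        (G ⋙ coyoneda.obj (Opposite.op c)) := fun c => W.preimage
      ((Functor.whiskerRight β (coyoneda.obj (Opposite.op c)) :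
        J ⋙ (F ⋙ coyoneda.obj (Opposite.op c)) ⟶
          J ⋙ (G ⋙ coyoneda.obj (Opposite.op c)))) with hγdef
    have hγ : ∀ (c : C) (a : A) (x : c ⟶ F.obj (J.obj a)),
        (γ c).app (J.obj a) x = x ≫ β.app a := by
      intro c a x
      have h1 : W.map (γ c) = (Functor.whiskerRight β (coyoneda.obj (Opposite.op c)) :
          J ⋙ (F ⋙ coyoneda.obj (Opposite.op c)) ⟶
            J ⋙ (G ⋙ coyoneda.obj (Opposite.op c))) := W.map_preimage _
      exact ConcreteCategory.congr_hom (NatTrans.congr_app h1 a) x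
    have hcomp : ∀ {c c' : C} (hcc : c' ⟶ c) (b : B) (x : c ⟶ F.obj b),
        (γ c').app b (hcc ≫ x) = hcc ≫ (γ c).app b x := by
      intro c c' hcc b x
      have e : Functor.whiskerLeft F (coyoneda.map hcc.op) ≫ γ c' =
          γ c ≫ Functor.whiskerLeft G (coyoneda.map hcc.op) := by
        apply hfaith.map_injective
        apply NatTrans.ext
        funext a
        apply ConcreteCategory.hom_ext; intro x0
        show (γ c').app (J.obj a) (hcc ≫ x0) = hcc ≫ (γ c).app (J.obj a) x0
        rw [hγ, hγ, Category.assoc]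
      exact ConcreteCategory.congr_hom (NatTrans.congr_app e b) x
    refine ⟨{ app := fun b => (γ (F.obj b)).app b (𝟙 (F.obj b))
              naturality := by
                intro b b' g
                have h2 : (γ (F.obj b)).app b' (𝟙 (F.obj b) ≫ F.map g) =
                    (γ (F.obj b)).app b (𝟙 (F.obj b)) ≫ G.map g :=
                  ConcreteCategory.congr_hom ((γ (F.obj b)).naturality g) (𝟙 (F.obj b))
                calc F.map g ≫ (γ (F.obj b')).app b' (𝟙 (F.obj b'))
                    = (γ (F.obj b)).app b' (F.map g ≫ 𝟙 (F.obj b')) := (hcomp (F.map g) b' _).symm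
                  _ = (γ (F.obj b)).app b' (𝟙 (F.obj b) ≫ F.map g) := by
                        rw [Category.comp_id, Category.id_comp]
                  _ = (γ (F.obj b)).app b (𝟙 (F.obj b)) ≫ G.map g := h2 }, ?_⟩
    apply NatTrans.ext
    funext a
    show (γ (F.obj (J.obj a))).app (J.obj a) (𝟙 _) = β.app a
    rw [hγ, Category.id_comp]
  · constructor
    intro F G α₁ α₂ hh
    have e : ∀ c : C, (Functor.whiskerRight α₁ (coyoneda.obj (Opposite.op c)) :
        F ⋙ coyoneda.obj (Opposite.op c) ⟶ G ⋙ coyoneda.obj (Opposite.op c)) =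
        Functor.whiskerRight α₂ (coyoneda.obj (Opposite.op c)) := by
      intro c
      apply hfaith.map_injective
      apply NatTrans.ext
      funext a
      apply ConcreteCategory.hom_ext; intro x
      show x ≫ α₁.app (J.obj a) = x ≫ α₂.app (J.obj a)
      have h2 : α₁.app (J.obj a) = α₂.app (J.obj a) := NatTrans.congr_app hh a
      rw [h2]
    apply NatTrans.ext
    funext b
    have h3 := ConcreteCategory.congr_hom (NatTrans.congr_app (e (F.obj b)) b) (𝟙 (F.obj b))
    have h4 : 𝟙 (F.obj b) ≫ α₁.app b = 𝟙 (F.obj b) ≫ α₂.app b := h3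
    rw [Category.id_comp, Category.id_comp] at h4
    exact h4

/-- A lax epimorphism (tested against small categories) has fully faithful whiskering into
`Type u`, via an induced category on `B ⊕ B`. -/
lemma whiskeringLeft_type_ff_of_isLaxEpi (J : A ⥤ B) (h : J.IsLaxEpi) :
    ((Functor.whiskeringLeft A B (Type u)).obj J).Full ∧
      ((Functor.whiskeringLeft A B (Type u)).obj J).Faithful := by
  constructor
  · constructor
    intro F G β
    set ι : B ⊕ B → Type u := Sum.elim F.obj G.obj with hι
    obtain ⟨hfull, hfaith⟩ := h (InducedCategory (Type u) ι)
    let F' : B ⥤ InducedCategory (Type u) ι :=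
      { obj := fun b => Sum.inl b
        map := fun {b b'} g => InducedCategory.homMk (F.map g : ι (Sum.inl b) ⟶ ι (Sum.inl b'))
        map_id := fun b => InducedCategory.hom_ext (F.map_id b)
        map_comp := fun f g => InducedCategory.hom_ext (F.map_comp f g) }
    let G' : B ⥤ InducedCategory (Type u) ι :=
      { obj := fun b => Sum.inr b
        map := fun {b b'} g => InducedCategory.homMk (G.map g : ι (Sum.inr b) ⟶ ι (Sum.inr b'))
        map_id := fun b => InducedCategory.hom_ext (G.map_id b)
        map_comp := fun f g => InducedCategory.hom_ext (G.map_comp f g) }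
    let β' : J ⋙ F' ⟶ J ⋙ G' :=
      { app := fun a => InducedCategory.homMk (β.app a : ι (Sum.inl (J.obj a)) ⟶ ι (Sum.inr (J.obj a)))
        naturality := fun a a' g => InducedCategory.hom_ext (β.naturality g) }
    obtain ⟨α', hα'⟩ := hfull.map_surjective β'
    refine ⟨{ app := fun b => ((α'.app b).hom : F.obj b ⟶ G.obj b)
              naturality := fun b b' g => congrArg InducedCategory.Hom.hom (α'.naturality g) }, ?_⟩
    apply NatTrans.ext
    funext a
    exact congrArg InducedCategory.Hom.hom (NatTrans.congr_app hα' a)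
  · constructor
    intro F G α₁ α₂ hh
    set ι : B ⊕ B → Type u := Sum.elim F.obj G.obj with hι
    obtain ⟨hfull, hfaith⟩ := h (InducedCategory (Type u) ι)
    let F' : B ⥤ InducedCategory (Type u) ι :=
      { obj := fun b => Sum.inl b
        map := fun {b b'} g => InducedCategory.homMk (F.map g : ι (Sum.inl b) ⟶ ι (Sum.inl b'))
        map_id := fun b => InducedCategory.hom_ext (F.map_id b)
        map_comp := fun f g => InducedCategory.hom_ext (F.map_comp f g) }
    let G' : B ⥤ InducedCategory (Type u) ι :=
      { obj := fun b => Sum.inr b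
        map := fun {b b'} g => InducedCategory.homMk (G.map g : ι (Sum.inr b) ⟶ ι (Sum.inr b'))
        map_id := fun b => InducedCategory.hom_ext (G.map_id b)
        map_comp := fun f g => InducedCategory.hom_ext (G.map_comp f g) }
    let mk' : (F ⟶ G) → (F' ⟶ G') := fun α =>
      { app := fun b => InducedCategory.homMk (α.app b : ι (Sum.inl b) ⟶ ι (Sum.inr b))
        naturality := fun b b' g => InducedCategory.hom_ext (α.naturality g) }
    have e : mk' α₁ = mk' α₂ := by
      apply hfaith.map_injective
      apply NatTrans.ext
      funext a
      exact InducedCategory.hom_ext (NatTrans.congr_app hh a)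
    apply NatTrans.ext
    funext b
    exact congrArg InducedCategory.Hom.hom (NatTrans.congr_app e b)

end Transfer

/-- A functor `J : A ⥤ B` between small categories is a lax epimorphism if and only if it is
*absolutely dense*: the identity functor of `B` (with the identity transformation on `J`,
encoded via the right unitor `J ≅ J ⋙ 𝟭 B`) is a left Kan extension of `J` along `J`, and
this left Kan extension is preserved by every functor `F : B ⥤ Type u`, i.e. `F` together
with the identity transformation on `J ⋙ F` is a left Kan extension of `J ⋙ F` along `J`. -/
theorem Functor.isLaxEpi_iff_absolutely_dense {A B : Type u} [SmallCategory A]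
    [SmallCategory B] (J : A ⥤ B) :
    J.IsLaxEpi ↔
      ((𝟭 B).IsLeftKanExtension ((J.rightUnitor).inv : J ⟶ J ⋙ 𝟭 B) ∧
        ∀ F : B ⥤ Type u,
          F.IsLeftKanExtension ((𝟙 (J ⋙ F)) : J ⋙ F ⟶ J ⋙ F)) := by
  constructor
  · intro h
    obtain ⟨hfB, hfaB⟩ := h B
    obtain ⟨hfT, hfaT⟩ := whiskeringLeft_type_ff_of_isLaxEpi J h
    exact ⟨isLeftKanExtension_of_whiskeringLeft_ff J hfB hfaB (𝟭 B) J.rightUnitor.inv,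
      fun F => isLeftKanExtension_of_whiskeringLeft_ff J hfT hfaT F (𝟙 (J ⋙ F))⟩
  · rintro ⟨_, h2⟩ C _
    have hT := whiskeringLeft_ff_of_lke (E := Type u) J h2
    exact whiskeringLeft_ff_transfer J hT.1 hT.2 C

end CategoryTheory
end

section
/- A functor J : A ⥤ B between small categories is a lax epimorphism if and only if J is absolutely codense, i.e.: (i) the identity functor 𝟭_B, together with the identity natural transformation on J, is a right Kan extension of J along J; and (ii) this right Kan extension is preserved by every functor into Type: for every functor F : B ⥤ Type, the functor F together with the identity natural transformation on J ⋙ F is a right Kan extension of J ⋙ F along J. -/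
open CategoryTheory

universe u

namespace CategoryTheory

section AuxLaxEpi

variable {A B : Type u} [SmallCategory A] [SmallCategory B] (J : A ⥤ B)

/-- If whiskering on the left with `J` is fully faithful for functors into `H`, then any
extension along `J` with invertible comparison map is a right Kan extension. -/
lemma Functor.isRightKanExtension_of_ff_aux
    {H : Type*} [Category H]
    (hfull : ((whiskeringLeft A B H).obj J).Full)
    (hfaith : ((whiskeringLeft A B H).obj J).Faithful)
    (F' : B ⥤ H) (K : A ⥤ H) (α : J ⋙ F' ⟶ K) [IsIso α] :
    F'.IsRightKanExtension α := by
  letI := hfull; letI := hfaith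
  set W := (whiskeringLeft A B H).obj J with hW
  constructor
  refine ⟨Limits.IsTerminal.ofUniqueHom (fun G => CostructuredArrow.homMk
    (W.preimage (show W.obj G.left ⟶ W.obj F' from G.hom ≫ CategoryTheory.inv α)) ?_)
    (fun G m => ?_)⟩
  · erw [W.map_preimage]
    exact (by simp : (G.hom ≫ CategoryTheory.inv α) ≫ α = G.hom)
  · refine CommaMorphism.ext ?_ (Subsingleton.elim _ _)
    apply W.map_injective
    have := CostructuredArrow.w m
    dsimp [CostructuredArrow.homMk] at this ⊢
    erw [W.map_preimage, ← this]
    simp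
    erw [Category.assoc, IsIso.hom_inv_id, Category.comp_id]
    rfl

/-- From fully faithfulness of whiskering with `J` into all small categories, deduce it for
`Type u`, via an induced small category structure on `B ⊕ B`. -/
lemma Functor.typeFF_aux
    (h : ∀ (C : Type u) [SmallCategory C],
      (((whiskeringLeft A B C).obj J).Full ∧ ((whiskeringLeft A B C).obj J).Faithful)) :
    ((whiskeringLeft A B (Type u)).obj J).Full ∧
      ((whiskeringLeft A B (Type u)).obj J).Faithful := by
  have key : ∀ (M F : B ⥤ Type u) (γ : J ⋙ M ⟶ J ⋙ F),
      ∃! σ : M ⟶ F, whiskerLeft J σ = γ := by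
    intro M F γ
    let C := InducedCategory (Type u) (Sum.elim M.obj F.obj)
    letI : SmallCategory C := inferInstance
    obtain ⟨hfull, hfaith⟩ := h C
    let M' : B ⥤ C :=
      { obj := fun b => Sum.inl b
        map := fun f => InducedCategory.homMk (M.map f)
        map_id := fun b => InducedCategory.hom_ext (M.map_id b)
        map_comp := fun f g => InducedCategory.hom_ext (M.map_comp f g) }
    let F' : B ⥤ C :=
      { obj := fun b => Sum.inr b
        map := fun f => InducedCategory.homMk (F.map f)
        map_id := fun b => InducedCategory.hom_ext (F.map_id b)
        map_comp := fun f g => InducedCategory.hom_ext (F.map_comp f g) }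
    let γ' : J ⋙ M' ⟶ J ⋙ F' :=
      { app := fun a => InducedCategory.homMk (γ.app a)
        naturality := fun a a' f => InducedCategory.hom_ext (γ.naturality f) }
    obtain ⟨σ', hσ'⟩ := hfull.map_surjective (F := (whiskeringLeft A B C).obj J)
      (X := M') (Y := F') γ'
    let σ : M ⟶ F :=
      { app := fun b => (σ'.app b).hom
        naturality := fun b b' f => congrArg InducedCategory.Hom.hom (σ'.naturality f) }
    refine ⟨σ, ?_, ?_⟩
    · ext a x
      exact congrFun (congrArg (fun τ => (τ.app a).hom) hσ') x
    · intro τ hτ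
      let τ' : M' ⟶ F' :=
        { app := fun b => InducedCategory.homMk (τ.app b)
          naturality := fun b b' f => InducedCategory.hom_ext (τ.naturality f) }
      have hw : whiskerLeft J τ' = γ' := by
        ext a : 2
        exact InducedCategory.hom_ext (congrArg (fun ρ => ρ.app a) hτ)
      have h2 : τ' = σ' := by
        apply hfaith.map_injective (F := (whiskeringLeft A B C).obj J)
        rw [hσ']
        exact hw
      ext b x
      exact congrFun (congrArg (fun ρ => (ρ.app b).hom) h2) x
  constructor
  · exact ⟨fun {M F} γ => ⟨(key M F γ).choose, (key M F γ).choose_spec.1⟩⟩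
  · exact ⟨fun {M F} {σ τ} hστ => ((key M F (whiskerLeft J τ)).choose_spec.2 σ hστ).trans
      ((key M F (whiskerLeft J τ)).choose_spec.2 τ rfl).symm⟩

/-- From fully faithfulness of whiskering with `J` into `Type u`, deduce it for all small
categories, via coyoneda. -/
lemma Functor.smallFF_aux
    (hfull : ((whiskeringLeft A B (Type u)).obj J).Full)
    (hfaith : ((whiskeringLeft A B (Type u)).obj J).Faithful)
    (C : Type u) [SmallCategory C] :
    (((whiskeringLeft A B C).obj J).Full ∧ ((whiskeringLeft A B C).obj J).Faithful) := by
  letI := hfull; letI := hfaith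
  set WT := (whiskeringLeft A B (Type u)).obj J with hWT
  have faith : ((whiskeringLeft A B C).obj J).Faithful := by
    constructor
    intro M F σ τ h
    ext b
    have h2 : WT.map (whiskerRight σ (coyoneda.obj (Opposite.op (M.obj b))))
        = WT.map (whiskerRight τ (coyoneda.obj (Opposite.op (M.obj b)))) := by
      ext a g
      have hc : σ.app (J.obj a) = τ.app (J.obj a) := congrArg (fun ρ => ρ.app a) h
      show g ≫ σ.app (J.obj a) = g ≫ τ.app (J.obj a)
      rw [hc]
    have h3 := WT.map_injective h2
    have h4 := congrFun (congrArg (fun ρ => ρ.app b) h3) (𝟙 (M.obj b))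
    simpa using h4
  have full : ((whiskeringLeft A B C).obj J).Full := by
    constructor
    intro M F γ
    let Y : C → (C ⥤ Type u) := fun c => coyoneda.obj (Opposite.op c)
    let P : ∀ c : C, (M ⋙ Y c ⟶ F ⋙ Y c) := fun c =>
      WT.preimage (show WT.obj (M ⋙ Y c) ⟶ WT.obj (F ⋙ Y c) from whiskerRight γ (Y c))
    have fac : ∀ (c : C) (a : A) (g : c ⟶ M.obj (J.obj a)),
        (P c).app (J.obj a) g = g ≫ γ.app a := by
      intro c a g
      have hp := WT.map_preimage
        (show WT.obj (M ⋙ Y c) ⟶ WT.obj (F ⋙ Y c) from whiskerRight γ (Y c))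
      exact congrFun (congrArg (fun ρ => ρ.app a) hp) g
    have natc : ∀ {c c' : C} (f : c' ⟶ c) (b : B) (g : c ⟶ M.obj b),
        f ≫ (P c).app b g = (P c').app b (f ≫ g) := by
      intro c c' f b g
      have he : P c ≫ whiskerLeft F (coyoneda.map f.op)
          = whiskerLeft M (coyoneda.map f.op) ≫ P c' := by
        apply WT.map_injective
        ext a g'
        show f ≫ (P c).app (J.obj a) g' = (P c').app (J.obj a) (f ≫ g')
        rw [fac, fac, Category.assoc]
      exact congrFun (congrArg (fun ρ => ρ.app b) he) g
    let σ : M ⟶ F :=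
      { app := fun b => (P (M.obj b)).app b (𝟙 (M.obj b))
        naturality := by
          intro b b' g
          have h1 : (P (M.obj b)).app b' (𝟙 (M.obj b) ≫ M.map g) =
              (P (M.obj b)).app b (𝟙 (M.obj b)) ≫ F.map g :=
            congrArg (fun φ => φ (𝟙 (M.obj b))) ((P (M.obj b)).naturality g)
          have h2 := natc (M.map g) b' (𝟙 (M.obj b'))
          simp only [Y, types_comp_apply, Functor.comp_obj, Functor.comp_map,
            Category.id_comp, Category.comp_id] at h1 h2
          show M.map g ≫ (P (M.obj b')).app b' (𝟙 (M.obj b')) =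
            (P (M.obj b)).app b (𝟙 (M.obj b)) ≫ F.map g
          rw [h2, h1] }
    refine ⟨σ, ?_⟩
    ext a
    show (P (M.obj (J.obj a))).app (J.obj a) (𝟙 (M.obj (J.obj a))) = γ.app a
    rw [fac, Category.id_comp]
  exact ⟨full, faith⟩

end AuxLaxEpi

/-- A functor `J : A ⥤ B` between small categories is a lax epimorphism if and only if it is
*absolutely codense*: the identity functor of `B` (with the identity transformation on `J`,
encoded via the right unitor `J ⋙ 𝟭 B ≅ J`) is a right Kan extension of `J` along `J`, and
this right Kan extension is preserved by every functor `F : B ⥤ Type u`, i.e. `F` together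
with the identity transformation on `J ⋙ F` is a right Kan extension of `J ⋙ F` along `J`. -/
theorem Functor.isLaxEpi_iff_absolutely_codense {A B : Type u} [SmallCategory A]
    [SmallCategory B] (J : A ⥤ B) :
    J.IsLaxEpi ↔
      ((𝟭 B).IsRightKanExtension ((J.rightUnitor).hom : J ⋙ 𝟭 B ⟶ J) ∧
        ∀ F : B ⥤ Type u,
          F.IsRightKanExtension ((𝟙 (J ⋙ F)) : J ⋙ F ⟶ J ⋙ F)) := by
  constructor
  · intro h
    constructor
    · obtain ⟨hf, hff⟩ := h B
      exact J.isRightKanExtension_of_ff_aux hf hff (𝟭 B) J J.rightUnitor.hom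
    · intro F
      obtain ⟨hf, hff⟩ := J.typeFF_aux h
      exact J.isRightKanExtension_of_ff_aux hf hff F (J ⋙ F) (𝟙 (J ⋙ F))
  · rintro ⟨_, h2⟩
    intro C _
    have hfull : ((whiskeringLeft A B (Type u)).obj J).Full := by
      constructor
      intro M F γ
      haveI := h2 F
      refine ⟨F.liftOfIsRightKanExtension (𝟙 (J ⋙ F)) M γ, ?_⟩
      have := F.liftOfIsRightKanExtension_fac (𝟙 (J ⋙ F)) M γ
      rw [Category.comp_id] at this
      exact this
    have hfaith : ((whiskeringLeft A B (Type u)).obj J).Faithful := by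
      constructor
      intro M F σ τ h
      haveI := h2 F
      refine F.hom_ext_of_isRightKanExtension (𝟙 (J ⋙ F)) σ τ ?_
      rw [Category.comp_id, Category.comp_id]
      exact h
    exact J.smallFF_aux hfull hfaith C

end CategoryTheory
end

section
/- Let F : B ⥤ A and G : A ⥤ B be functors with an adjunction F ⊣ G. Then G is fully faithful if and only if there exists some natural isomorphism G ⋙ F ≅ 𝟭_A (not necessarily the counit). -/
open CategoryTheory

universe v₁ v₂ u₁ u₂

/-- Given an adjunction `F ⊣ G` with `F : B ⥤ A` and `G : A ⥤ B`, the functor `G` is fully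
faithful if and only if there exists some natural isomorphism `G ⋙ F ≅ 𝟭 A`
(not necessarily the counit). -/
theorem fullyFaithful_right_adjoint_iff_nonempty_iso {A : Type u₁} {B : Type u₂}
    [Category.{v₁} A] [Category.{v₂} B] {F : B ⥤ A} {G : A ⥤ B} (adj : F ⊣ G) :
    (G.Full ∧ G.Faithful) ↔ Nonempty (G ⋙ F ≅ 𝟭 A) := by
  constructor
  · rintro ⟨hF, hFa⟩
    have : IsIso adj.counit := NatIso.isIso_of_isIso_app _
    exact ⟨asIso adj.counit⟩
  · rintro ⟨j⟩
    have := adj.isIso_counit_of_iso j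
    have ff := adj.fullyFaithfulROfIsIsoCounit
    exact ⟨ff.full, ff.faithful⟩
end

section
/- Every discrete splitting bifibration P : 𝔼 ⥤ B is (1) faithful, (2) conservative (it reflects isomorphisms), and (3) reflects identities: whenever f : d ⟶ e in 𝔼 is such that P d = P e and P f equals the identity morphism of P d (modulo this object equality), then d = e and f is the identity of d. -/
open CategoryTheory

universe u

namespace CategoryTheory

variable {E B : Type u} [Category.{u} E] [Category.{u} B]

/-- Objects of the factorization category `g ↓↓ P`: factorizations `b ⟶ P e ⟶ c` of `g`. -/
structure FactObj (P : E ⥤ B) {b c : B} (g : b ⟶ c) where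
  pt : E
  h : b ⟶ P.obj pt
  k : P.obj pt ⟶ c
  fac : h ≫ k = g

/-- The factorization category `g ↓↓ P`. -/
instance FactObj.category (P : E ⥤ B) {b c : B} (g : b ⟶ c) : Category (FactObj P g) where
  Hom x y := { u : x.pt ⟶ y.pt // x.h ≫ P.map u = y.h ∧ P.map u ≫ y.k = x.k }
  id x := ⟨𝟙 x.pt, by simp, by simp⟩
  comp {x y z} u v := ⟨u.1 ≫ v.1,
    by rw [Functor.map_comp, ← Category.assoc, u.2.1, v.2.1],
    by rw [Functor.map_comp, Category.assoc, v.2.2, u.2.2]⟩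
  id_comp f := Subtype.ext (by simp)
  comp_id f := Subtype.ext (by simp)
  assoc f g h := Subtype.ext (by simp)

/-- A `P`-split of `b`: a factorization `b ⟶ P e ⟶ b` of the identity such that
`(e, 𝟙, h ∘ k)` and `(e, h ∘ k, 𝟙)` are connected in the factorization category
`(h ∘ k) ↓↓ P`. -/
def IsPSplit (P : E ⥤ B) {b : B} (e : E) (h : b ⟶ P.obj e) (k : P.obj e ⟶ b) : Prop :=
  h ≫ k = 𝟙 b ∧
    Zigzag (J := FactObj P (k ≫ h))
      ⟨e, 𝟙 (P.obj e), k ≫ h, Category.id_comp _⟩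
      ⟨e, k ≫ h, 𝟙 (P.obj e), Category.comp_id _⟩

/-- A lift of a `P`-split diagram, as in the definition of a discrete splitting
bifibration. -/
structure SplitLift (P : E ⥤ B) {b c : B} (g : b ⟶ c) {e e' : E}
    (h : b ⟶ P.obj e) (k : P.obj e ⟶ b) (h' : c ⟶ P.obj e') (k' : P.obj e' ⟶ c) where
  b₀ : E
  c₀ : E
  h₀ : b₀ ⟶ e
  k₀ : e ⟶ b₀
  g₀ : b₀ ⟶ c₀
  h₀' : c₀ ⟶ e'
  k₀' : e' ⟶ c₀
  hb : P.obj b₀ = b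
  hc : P.obj c₀ = c
  map_h₀ : P.map h₀ = eqToHom hb ≫ h
  map_k₀ : P.map k₀ = k ≫ eqToHom hb.symm
  map_g₀ : P.map g₀ = eqToHom hb ≫ g ≫ eqToHom hc.symm
  map_h₀' : P.map h₀' = eqToHom hc ≫ h'
  map_k₀' : P.map k₀' = k' ≫ eqToHom hc.symm
  comm : h₀ ≫ k₀ ≫ g₀ = g₀ ≫ h₀' ≫ k₀'

/-- A functor `P : E ⥤ B` is a *discrete splitting bifibration* if every `P`-split diagram
(a morphism `g : b ⟶ c`, a `P`-split of `b` and a `P`-split of `c`, suitably connected in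
`g ↓↓ P`) admits a unique lift. -/
def IsDSB (P : E ⥤ B) : Prop :=
  ∀ {b c : B} (g : b ⟶ c) {e e' : E} (h : b ⟶ P.obj e) (k : P.obj e ⟶ b)
    (h' : c ⟶ P.obj e') (k' : P.obj e' ⟶ c)
    (hsp : IsPSplit P e h k) (hsp' : IsPSplit P e' h' k'),
    Zigzag (J := FactObj P g)
      ⟨e, h, k ≫ g, by rw [← Category.assoc, hsp.1, Category.id_comp]⟩
      ⟨e', g ≫ h', k', by rw [Category.assoc, hsp'.1, Category.comp_id]⟩ →
    ∃ L : SplitLift P g h k h' k', ∀ L' : SplitLift P g h k h' k', L' = L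

end CategoryTheory


section Proofs

open CategoryTheory

variable {E B : Type u} [Category.{u} E] [Category.{u} B] (P : E ⥤ B)

lemma trivialSplit (e : E) : IsPSplit P e (𝟙 (P.obj e)) (𝟙 (P.obj e)) := by
  refine ⟨by simp, ?_⟩
  exact Relation.ReflTransGen.single (Or.inl ⟨⟨𝟙 e, by simp, by simp⟩⟩)

lemma dsb_map_inj (hP : IsDSB P) {d e : E} (f₁ f₂ : d ⟶ e)
    (hf : P.map f₁ = P.map f₂) : f₁ = f₂ := by
  obtain ⟨L, hL⟩ := hP (P.map f₁) (𝟙 _) (𝟙 _) (𝟙 _) (𝟙 _)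
    (trivialSplit P d) (trivialSplit P e)
    (Relation.ReflTransGen.single (Or.inl ⟨⟨f₁, by simp, by simp⟩⟩))
  have h1 := hL ⟨d, e, 𝟙 d, 𝟙 d, f₁, 𝟙 e, 𝟙 e, rfl, rfl,
    by simp, by simp, by simp, by simp, by simp, by simp⟩
  have h2 := hL ⟨d, e, 𝟙 d, 𝟙 d, f₂, 𝟙 e, 𝟙 e, rfl, rfl,
    by simp, by simp, by simp [hf], by simp, by simp, by simp⟩
  have h3 := h1.trans h2.symm
  rw [SplitLift.mk.injEq] at h3
  exact eq_of_heq h3.2.2.2.2.1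

lemma dsb_retraction (hP : IsDSB P) {d e : E} (f : d ⟶ e) (q : P.obj e ⟶ P.obj d)
    (h1 : P.map f ≫ q = 𝟙 _) (h2 : q ≫ P.map f = 𝟙 _) :
    ∃ m : e ⟶ d, P.map m = q := by
  obtain ⟨L, hL⟩ := hP q (𝟙 _) (𝟙 _) (𝟙 _) (𝟙 _)
    (trivialSplit P e) (trivialSplit P d)
    (Relation.ReflTransGen.single (Or.inr ⟨⟨f, by simpa using h2, by simpa using h1⟩⟩))
  refine ⟨L.k₀ ≫ L.g₀ ≫ L.h₀', ?_⟩
  simp [L.map_k₀, L.map_g₀, L.map_h₀']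

end Proofs

open CategoryTheory in
/-- Every discrete splitting bifibration is faithful, conservative, and reflects
identities. -/
theorem isDSB_faithful_conservative_reflects_id {E B : Type u}
    [Category.{u} E] [Category.{u} B] (P : E ⥤ B) (hP : IsDSB P) :
    P.Faithful ∧ P.ReflectsIsomorphisms ∧
      (∀ {d e : E} (f : d ⟶ e) (hde : P.obj d = P.obj e),
        P.map f = eqToHom hde → ∃ h : d = e, f = eqToHom h) := by
  have faithful : P.Faithful := ⟨fun {d e f₁ f₂} h => dsb_map_inj P hP f₁ f₂ h⟩
  refine ⟨faithful, ⟨fun {d e} f hf => ?_⟩, fun {d e} f hde hf => ?_⟩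
  · obtain ⟨m, hm⟩ := dsb_retraction P hP f (inv (P.map f)) (by simp) (by simp)
    exact ⟨⟨m, dsb_map_inj P hP _ _ (by simp [hm]),
      dsb_map_inj P hP _ _ (by simp [hm])⟩⟩
  · obtain ⟨m, hm⟩ := dsb_retraction P hP f (eqToHom hde.symm)
      (by rw [hf]; simp) (by rw [hf]; simp)
    have hmf : m ≫ f = 𝟙 e := dsb_map_inj P hP _ _ (by simp [hm, hf])
    obtain ⟨L, hL⟩ := hP (𝟙 (P.obj d)) (𝟙 _) (𝟙 _) (𝟙 _) (𝟙 _)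
      (trivialSplit P d) (trivialSplit P d)
      (Relation.ReflTransGen.single (Or.inl ⟨⟨𝟙 d, by simp, by simp⟩⟩))
    have h1 := hL ⟨d, d, 𝟙 d, 𝟙 d, 𝟙 d, 𝟙 d, 𝟙 d, rfl, rfl,
      by simp, by simp, by simp, by simp, by simp, by simp⟩
    have h2 := hL ⟨d, e, 𝟙 d, 𝟙 d, f, m, f, rfl, hde.symm,
      by simp, by simp, by simp [hf], by simp [hm], by simp [hf],
      by simp [hmf]⟩
    have h3 := h2.trans h1.symm
    rw [SplitLift.mk.injEq] at h3
    have hed : e = d := h3.2.1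
    refine ⟨hed.symm, ?_⟩
    have hg := h3.2.2.2.2.1
    subst hed
    simpa using eq_of_heq hg
end
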